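/- Under Assumption 1 with κ > 0 and ε ≤ κ(1−β)/(9(r+1)), for p = diag(X_opt) of an optimal solution of P(A,r) (after removing duplicate columns so β < 1), the basis indices I satisfy p(i) > r/(r+1) for all i ∈ I, and consequently p(i) ≤ r/(r+1) for all i ∉ I; hence the r largest entries of p are exactly the basis indices. -/

import Mathlib

noncomputable section
open Matrix
open scoped Classical

/-- Entrywise L1 norm of a vector. -/
def l1 {α : Type*} [Fintype α] (v : α → ℝ) : ℝ := ∑ i, |v i|

/-- Induced L1 norm of a matrix (maximum column sum of absolute values). -/
def ml1 {α β : Type*} [Fintype α] [Fintype β] (M : Matrix α β ℝ) : ℝ :=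
  sSup (Set.range fun j => ∑ i, |M i j|)

/-- Feasible set of problem P(A,r). -/
def Feas {ι : Type*} [Fintype ι] [DecidableEq ι] (X : Matrix ι ι ℝ) (r : ℕ) : Prop :=
  Matrix.trace X = (r : ℝ) ∧ (∀ i, X i i ≤ 1) ∧ (∀ i j, 0 ≤ X i j) ∧
    (∀ i j, X i j ≤ X i i)

/-- κ(W) = min over j of min over nonnegative z (supported off j) of
    ‖w_j − W(:,R∖{j}) z‖₁. -/
def kappa {d r : ℕ} (W : Matrix (Fin d) (Fin r) ℝ) : ℝ :=
  sInf {c | ∃ (j : Fin r) (z : Fin r → ℝ), (∀ k, 0 ≤ z k) ∧ z j = 0 ∧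
    c = l1 (fun i => W i j - ∑ k, W i k * z k)}

/-- ω(W) = min over distinct pairs of ‖w_{j₁} − w_{j₂}‖₁. -/
def omegaW {d r : ℕ} (W : Matrix (Fin d) (Fin r) ℝ) : ℝ :=
  sInf {c | ∃ j₁ j₂ : Fin r, j₁ ≠ j₂ ∧ c = l1 (fun i => W i j₁ - W i j₂)}

/-- β = maximum entry of H̄. -/
def betaH {r m : ℕ} (Hb : Matrix (Fin r) (Fin m) ℝ) : ℝ :=
  sSup (Set.range fun p : Fin r × Fin m => Hb p.1 p.2)

set_option maxHeartbeats 1000000 in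
/-- If ε ≤ κ(1−β)/(9(r+1)) (with κ > 0, β < 1), the diagonal of X_opt exceeds
    r/(r+1) exactly on the basis indices; hence the r largest entries of
    p = diag(X_opt) are the basis indices. -/
theorem hottopixx_identifies_basis
    {d r m : ℕ} (W : Matrix (Fin d) (Fin r) ℝ) (Hbar : Matrix (Fin r) (Fin m) ℝ)
    (σ : Equiv.Perm (Fin r ⊕ Fin m))
    (N A V : Matrix (Fin d) (Fin r ⊕ Fin m) ℝ)
    (H : Matrix (Fin r) (Fin r ⊕ Fin m) ℝ) (ε : ℝ)
    (hW : ∀ i j, 0 ≤ W i j) (hHbar : ∀ i j, 0 ≤ Hbar i j)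
    (hH : H = fun j u => Matrix.fromCols (1 : Matrix (Fin r) (Fin r) ℝ) Hbar j (σ u))
    (hV : V = W * H) (hA : A = V + N)
    (hVcol : ∀ u, l1 (fun i => V i u) = 1)
    (hWcol : ∀ j, l1 (fun i => W i j) = 1)
    (hHcol : ∀ u, l1 (fun j => H j u) = 1)
    (hε0 : 0 ≤ ε) (hε1 : ε < 1) (hN : ml1 N ≤ ε)
    (Xopt : Matrix (Fin r ⊕ Fin m) (Fin r ⊕ Fin m) ℝ)
    (hfeas : Feas Xopt r)
    (hopt : ∀ X : Matrix (Fin r ⊕ Fin m) (Fin r ⊕ Fin m) ℝ,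
      Feas X r → ml1 (A - A * Xopt) ≤ ml1 (A - A * X))
    (hκ : 0 < kappa W) (hβ : betaH Hbar < 1)
    (hεb : ε ≤ kappa W * (1 - betaH Hbar) / (9 * (r + 1))) :
    (∀ j : Fin r,
        (r : ℝ) / (r + 1) < Xopt (σ.symm (Sum.inl j)) (σ.symm (Sum.inl j))) ∧
    (∀ u : Fin r ⊕ Fin m, (∀ j : Fin r, u ≠ σ.symm (Sum.inl j)) →
        Xopt u u ≤ (r : ℝ) / (r + 1)) := by

  classical
  -- dispose of r = 0
  rcases Nat.eq_zero_or_pos r with hr0 | hrpos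
  · exfalso
    subst hr0
    have hset : {c | ∃ (j : Fin 0) (z : Fin 0 → ℝ), (∀ k, 0 ≤ z k) ∧ z j = 0 ∧
        c = l1 (fun i => W i j - ∑ k, W i k * z k)} = (∅ : Set ℝ) := by
      ext c; simp
    have h0 : kappa W = 0 := by unfold kappa; rw [hset, Real.sInf_empty]
    rw [h0] at hκ; exact lt_irrefl 0 hκ
  have hr1 : (1:ℝ) ≤ (r:ℝ) := by exact_mod_cast hrpos
  obtain ⟨htr, hd1, hnn, hdg⟩ := hfeas
  -- split a sum over Fin r ⊕ Fin m along σ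
  have hbA : ∀ (f : Fin r ⊕ Fin m → ℝ), ∑ u, f u =
      ∑ j, f (σ.symm (Sum.inl j)) + ∑ l, f (σ.symm (Sum.inr l)) := by
    intro f
    rw [← Equiv.sum_comp σ.symm f, Fintype.sum_sum_type]
  -- column bounds for N
  have hNcol : ∀ u, ∑ i, |N i u| ≤ ε := by
    intro u
    exact le_trans (le_csSup ((Set.finite_range _).bddAbove) ⟨u, rfl⟩) hN
  -- H entries
  have hHapp : ∀ k u, H k u = Matrix.fromCols (1 : Matrix (Fin r) (Fin r) ℝ) Hbar k (σ u) := by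
    intro k u; rw [hH]
  have hHb : ∀ (k j' : Fin r), H k (σ.symm (Sum.inl j')) = if k = j' then 1 else 0 := by
    intro k j'
    rw [hHapp, Equiv.apply_symm_apply, Matrix.fromCols_apply_inl, Matrix.one_apply]
  have hHbr : ∀ (k : Fin r) (l : Fin m), H k (σ.symm (Sum.inr l)) = Hbar k l := by
    intro k l
    rw [hHapp, Equiv.apply_symm_apply, Matrix.fromCols_apply_inr]
  have hHbarle : ∀ k l, Hbar k l ≤ betaH Hbar := fun k l =>
    le_csSup ((Set.finite_range _).bddAbove) ⟨(k,l), rfl⟩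
  have hβ0 : 0 ≤ betaH Hbar := by
    rcases Nat.eq_zero_or_pos m with hm | hm
    · subst hm
      have he : (Set.range fun p : Fin r × Fin 0 => Hbar p.1 p.2) = ∅ := by
        rw [Set.range_eq_empty_iff]
        exact ⟨fun p => p.2.elim0⟩
      unfold betaH; rw [he, Real.sSup_empty]
    · exact le_trans (hHbar ⟨0, hrpos⟩ ⟨0, hm⟩)
        (hHbarle ⟨0, hrpos⟩ ⟨0, hm⟩)
  have hHnn : ∀ k u, 0 ≤ H k u := by
    intro k u
    rw [hHapp]
    rcases h : σ u with j | l
    · rw [Matrix.fromCols_apply_inl, Matrix.one_apply]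
      split <;> norm_num
    · rw [Matrix.fromCols_apply_inr]; exact hHbar _ _
  have hHle1 : ∀ k u, H k u ≤ 1 := by
    intro k u
    rw [hHapp]
    rcases h : σ u with j | l
    · rw [Matrix.fromCols_apply_inl, Matrix.one_apply]
      split <;> norm_num
    · rw [Matrix.fromCols_apply_inr]
      exact le_trans (hHbarle _ _) hβ.le
  have hHsum : ∀ u, ∑ k, H k u = 1 := by
    intro u
    have h := hHcol u
    unfold l1 at h
    rw [← h]
    exact Finset.sum_congr rfl fun k _ => (abs_of_nonneg (hHnn k u)).symm
  have hWsum : ∀ j, ∑ i, W i j = 1 := by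
    intro j
    have h := hWcol j
    unfold l1 at h
    rw [← h]
    exact Finset.sum_congr rfl fun i _ => (abs_of_nonneg (hW i j)).symm
  -- entry of A in terms of W, H, N
  have hAapp : ∀ i u, A i u = (∑ k, W i k * H k u) + N i u := by
    intro i u
    rw [hA, hV, Matrix.add_apply, Matrix.mul_apply]
  have hAbasis : ∀ (i : Fin d) (j : Fin r),
      A i (σ.symm (Sum.inl j)) = W i j + N i (σ.symm (Sum.inl j)) := by
    intro i j
    rw [hAapp]
    congr 1
    rw [Finset.sum_congr rfl (fun k _ => by rw [hHb k j])]
    simp [mul_ite, Finset.sum_ite_eq']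
  -- the ideal feasible point X0
  set X0 : Matrix (Fin r ⊕ Fin m) (Fin r ⊕ Fin m) ℝ :=
    fun u v => Sum.elim (fun j => H j v) (fun _ => (0:ℝ)) (σ u) with hX0def
  have hX0inl : ∀ (j : Fin r) v, X0 (σ.symm (Sum.inl j)) v = H j v := by
    intro j v; simp only [hX0def, Equiv.apply_symm_apply, Sum.elim_inl]
  have hX0inr : ∀ (l : Fin m) v, X0 (σ.symm (Sum.inr l)) v = 0 := by
    intro l v; simp only [hX0def, Equiv.apply_symm_apply, Sum.elim_inr]
  have hX0feas : Feas X0 r := by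
    refine ⟨?_, ?_, ?_, ?_⟩
    · show ∑ u, X0 u u = (r:ℝ)
      rw [hbA (fun u => X0 u u)]
      have h1 : ∀ j : Fin r, X0 (σ.symm (Sum.inl j)) (σ.symm (Sum.inl j)) = 1 := by
        intro j; rw [hX0inl, hHb]; simp
      have h2 : ∀ l : Fin m, X0 (σ.symm (Sum.inr l)) (σ.symm (Sum.inr l)) = 0 :=
        fun l => hX0inr l _
      rw [Finset.sum_congr rfl (fun j _ => h1 j), Finset.sum_congr rfl (fun l _ => h2 l)]
      simp
    · intro u
      rcases h : σ u with j | l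
      · have hu : u = σ.symm (Sum.inl j) := by rw [← h, Equiv.symm_apply_apply]
        rw [hu, hX0inl]; exact hHle1 _ _
      · have hu : u = σ.symm (Sum.inr l) := by rw [← h, Equiv.symm_apply_apply]
        rw [hu, hX0inr]; norm_num
    · intro u v
      rcases h : σ u with j | l
      · have hu : u = σ.symm (Sum.inl j) := by rw [← h, Equiv.symm_apply_apply]
        rw [hu, hX0inl]; exact hHnn _ _
      · have hu : u = σ.symm (Sum.inr l) := by rw [← h, Equiv.symm_apply_apply]
        rw [hu, hX0inr]
    · intro u v
      rcases h : σ u with j | l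
      · have hu : u = σ.symm (Sum.inl j) := by rw [← h, Equiv.symm_apply_apply]
        rw [hu, hX0inl, hX0inl, hHb]
        simp only [if_pos rfl]
        exact hHle1 _ _
      · have hu : u = σ.symm (Sum.inr l) := by rw [← h, Equiv.symm_apply_apply]
        rw [hu, hX0inr, hX0inr]
  -- residual of X0 is at most 2ε
  have hres0 : ∀ v, ∑ i, |(A - A * X0) i v| ≤ 2 * ε := by
    intro v
    have hcol : ∀ i, (A - A * X0) i v
        = N i v - ∑ j, N i (σ.symm (Sum.inl j)) * H j v := by
      intro i
      rw [Matrix.sub_apply, Matrix.mul_apply]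
      rw [hbA (fun u => A i u * X0 u v)]
      have e1 : ∀ j : Fin r, A i (σ.symm (Sum.inl j)) * X0 (σ.symm (Sum.inl j)) v
          = (W i j + N i (σ.symm (Sum.inl j))) * H j v := by
        intro j; rw [hAbasis, hX0inl]
      have e2 : ∀ l : Fin m, A i (σ.symm (Sum.inr l)) * X0 (σ.symm (Sum.inr l)) v = 0 := by
        intro l; rw [hX0inr, mul_zero]
      rw [Finset.sum_congr rfl (fun j _ => e1 j), Finset.sum_congr rfl (fun l _ => e2 l),
        Finset.sum_const_zero, add_zero, hAapp i v]
      have e3 : ∑ j, (W i j + N i (σ.symm (Sum.inl j))) * H j v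
          = ∑ j, W i j * H j v + ∑ j, N i (σ.symm (Sum.inl j)) * H j v := by
        rw [← Finset.sum_add_distrib]
        exact Finset.sum_congr rfl fun j _ => by ring
      rw [e3]
      ring
    calc ∑ i, |(A - A * X0) i v|
        = ∑ i, |N i v - ∑ j, N i (σ.symm (Sum.inl j)) * H j v| := by
          exact Finset.sum_congr rfl fun i _ => by rw [hcol i]
      _ ≤ ∑ i, (|N i v| + ∑ j, |N i (σ.symm (Sum.inl j))| * H j v) := by
          refine Finset.sum_le_sum fun i _ => ?_
          refine le_trans (abs_sub (N i v) _) (add_le_add (le_refl _) ?_)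
          refine le_trans (Finset.abs_sum_le_sum_abs _ _) ?_
          refine Finset.sum_le_sum fun j _ => ?_
          rw [abs_mul, abs_of_nonneg (hHnn j v)]
      _ = (∑ i, |N i v|) + ∑ j, (∑ i, |N i (σ.symm (Sum.inl j))|) * H j v := by
          rw [Finset.sum_add_distrib]
          congr 1
          rw [Finset.sum_comm]
          exact Finset.sum_congr rfl fun j _ => by rw [Finset.sum_mul]
      _ ≤ ε + ∑ j, ε * H j v := by
          refine add_le_add (hNcol v) (Finset.sum_le_sum fun j _ => ?_)
          exact mul_le_mul_of_nonneg_right (hNcol _) (hHnn j v)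
      _ = 2 * ε := by rw [← Finset.mul_sum, hHsum]; ring
  -- hence the optimal residual is at most 2ε, columnwise
  have hresopt : ∀ v, ∑ i, |(A - A * Xopt) i v| ≤ 2 * ε := by
    intro v
    have h1 : ∑ i, |(A - A * Xopt) i v| ≤ ml1 (A - A * Xopt) :=
      le_csSup ((Set.finite_range _).bddAbove) ⟨v, rfl⟩
    have h2 : ml1 (A - A * X0) ≤ 2 * ε := by
      refine Real.sSup_le ?_ (by linarith)
      rintro x ⟨v', rfl⟩
      exact hres0 v'
    exact h1.trans ((hopt X0 hX0feas).trans h2)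
  -- κ facts
  have hl1nn : ∀ {α : Type} [Fintype α] (v : α → ℝ), 0 ≤ l1 v := by
    intro α _ v
    exact Finset.sum_nonneg fun i _ => abs_nonneg _
  have hbdd : BddBelow {c | ∃ (j : Fin r) (z : Fin r → ℝ), (∀ k, 0 ≤ z k) ∧ z j = 0 ∧
      c = l1 (fun i => W i j - ∑ k, W i k * z k)} := by
    refine ⟨0, ?_⟩
    rintro c ⟨j, z, _, _, rfl⟩
    exact hl1nn _
  have hκmem : ∀ x ∈ {c | ∃ (j : Fin r) (z : Fin r → ℝ), (∀ k, 0 ≤ z k) ∧ z j = 0 ∧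
      c = l1 (fun i => W i j - ∑ k, W i k * z k)}, kappa W ≤ x := by
    intro x hx
    exact csInf_le hbdd hx
  have hεb' : 9 * ((r:ℝ) + 1) * ε ≤ kappa W * (1 - betaH Hbar) := by
    rw [le_div_iff₀ (by positivity)] at hεb
    calc 9 * ((r:ℝ) + 1) * ε = ε * (9 * ((r:ℝ) + 1)) := by ring
      _ ≤ kappa W * (1 - betaH Hbar) := by
          have : ε * (9 * ((r:ℕ):ℝ) + 9) ≤ kappa W * (1 - betaH Hbar) := by
            linear_combination hεb
          calc ε * (9 * ((r:ℝ) + 1)) = ε * (9 * ((r:ℕ):ℝ) + 9) := by ring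
            _ ≤ _ := this
  -- part 1
  have part1 : ∀ j : Fin r,
      (r : ℝ) / (r + 1) < Xopt (σ.symm (Sum.inl j)) (σ.symm (Sum.inl j)) := by
    intro j
    set i0 := σ.symm (Sum.inl j) with hi0
    set p := Xopt i0 i0 with hpdef
    have hp0 : 0 ≤ p := hnn i0 i0
    have hp1 : p ≤ 1 := hd1 i0
    set y : Fin r → ℝ := fun k => ∑ u, H k u * Xopt u i0 with hydef
    have hy0 : ∀ k, 0 ≤ y k :=
      fun k => Finset.sum_nonneg fun u _ => mul_nonneg (hHnn k u) (hnn u i0)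
    set s := ∑ u, Xopt u i0 with hsdef
    have hs0 : 0 ≤ s := Finset.sum_nonneg fun u _ => hnn u i0
    set δ := ∑ i, |W i j - ∑ k, W i k * y k| with hδdef
    have hδ0 : 0 ≤ δ := Finset.sum_nonneg fun i _ => abs_nonneg _
    have hysum : ∑ k, y k = s := by
      rw [hydef, hsdef, Finset.sum_comm]
      refine Finset.sum_congr rfl fun u _ => ?_
      rw [← Finset.sum_mul, hHsum, one_mul]
    -- δ ≤ (3 + s) ε
    have hδ1 : δ ≤ (3 + s) * ε := by
      have hid : ∀ i, W i j - ∑ k, W i k * y k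
          = (A - A * Xopt) i i0 - N i i0 + ∑ u, N i u * Xopt u i0 := by
        intro i
        rw [Matrix.sub_apply, Matrix.mul_apply, hAbasis i j]
        have e1 : ∑ u, A i u * Xopt u i0
            = ∑ u, (∑ k, W i k * H k u) * Xopt u i0 + ∑ u, N i u * Xopt u i0 := by
          rw [← Finset.sum_add_distrib]
          refine Finset.sum_congr rfl fun u _ => ?_
          rw [hAapp i u]; ring
        have e2 : ∑ u, (∑ k, W i k * H k u) * Xopt u i0 = ∑ k, W i k * y k := by
          have epush : ∀ u, (∑ k, W i k * H k u) * Xopt u i0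
              = ∑ k, W i k * H k u * Xopt u i0 := fun u => Finset.sum_mul _ _ _
          rw [Finset.sum_congr rfl fun u _ => epush u, Finset.sum_comm]
          refine Finset.sum_congr rfl fun k _ => ?_
          rw [hydef, Finset.mul_sum]
          refine Finset.sum_congr rfl fun u _ => by ring
        rw [e1, e2]
        ring
      calc δ = ∑ i, |(A - A * Xopt) i i0 - N i i0 + ∑ u, N i u * Xopt u i0| := by
            exact Finset.sum_congr rfl fun i _ => by rw [hid i]
        _ ≤ ∑ i, (|(A - A * Xopt) i i0| + |N i i0| + ∑ u, |N i u| * Xopt u i0) := by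
            refine Finset.sum_le_sum fun i _ => ?_
            refine le_trans (abs_add_le _ _) (add_le_add (abs_sub _ _) ?_)
            refine le_trans (Finset.abs_sum_le_sum_abs _ _) ?_
            refine Finset.sum_le_sum fun u _ => ?_
            rw [abs_mul, abs_of_nonneg (hnn u i0)]
        _ = (∑ i, |(A - A * Xopt) i i0|) + (∑ i, |N i i0|)
            + ∑ u, (∑ i, |N i u|) * Xopt u i0 := by
            rw [Finset.sum_add_distrib, Finset.sum_add_distrib]
            congr 1
            rw [Finset.sum_comm]
            exact Finset.sum_congr rfl fun u _ => by rw [Finset.sum_mul]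
        _ ≤ 2 * ε + ε + ∑ u, ε * Xopt u i0 := by
            refine add_le_add (add_le_add (hresopt i0) (hNcol i0)) ?_
            exact Finset.sum_le_sum fun u _ =>
              mul_le_mul_of_nonneg_right (hNcol u) (hnn u i0)
        _ = (3 + s) * ε := by rw [← Finset.mul_sum, ← hsdef]; ring
    -- s ≤ 1 + δ
    have hs1 : s ≤ 1 + δ := by
      have e1 : 1 - s = ∑ i, (W i j - ∑ k, W i k * y k) := by
        rw [Finset.sum_sub_distrib, hWsum j]
        congr 1
        rw [Finset.sum_comm]
        calc s = ∑ k, y k := hysum.symm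
          _ = ∑ k, (∑ i, W i k) * y k := by
              refine Finset.sum_congr rfl fun k _ => ?_
              rw [hWsum k, one_mul]
          _ = ∑ k, ∑ i, W i k * y k := by
              refine Finset.sum_congr rfl fun k _ => ?_
              rw [Finset.sum_mul]
      have e2 : |1 - s| ≤ δ := by
        rw [e1, hδdef]
        exact Finset.abs_sum_le_sum_abs _ _
      have := abs_le.mp e2
      linarith [this.1]
    -- κ (1 - y j) ≤ δ
    have hκy : kappa W * (1 - y j) ≤ δ := by
      rcases le_or_gt 1 (y j) with h | h
      · have h1 : kappa W * (1 - y j) ≤ 0 :=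
          mul_nonpos_of_nonneg_of_nonpos hκ.le (by linarith)
        linarith
      · have hc : (0:ℝ) < 1 - y j := by linarith
        set z : Fin r → ℝ := fun k => if k = j then 0 else y k / (1 - y j) with hzdef
        have hz0 : ∀ k, 0 ≤ z k := by
          intro k
          rw [hzdef]
          dsimp only
          split
          · exact le_refl 0
          · exact div_nonneg (hy0 k) hc.le
        have hzj : z j = 0 := by rw [hzdef]; simp
        have hmem : l1 (fun i => W i j - ∑ k, W i k * z k) ∈
            {c | ∃ (j : Fin r) (z : Fin r → ℝ), (∀ k, 0 ≤ z k) ∧ z j = 0 ∧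
              c = l1 (fun i => W i j - ∑ k, W i k * z k)} :=
          ⟨j, z, hz0, hzj, rfl⟩
        have hκle : kappa W ≤ l1 (fun i => W i j - ∑ k, W i k * z k) := hκmem _ hmem
        have hid : ∀ i, W i j - ∑ k, W i k * y k
            = (1 - y j) * (W i j - ∑ k, W i k * z k) := by
          intro i
          have h1 : ∀ k, W i k * y k - W i k * ((1 - y j) * z k)
              = if k = j then W i k * y k else 0 := by
            intro k
            by_cases hk : k = j
            · subst hk
              rw [hzdef]
              simp
            · rw [hzdef]
              simp only [if_neg hk]
              rw [mul_div_cancel₀ _ (ne_of_gt hc)]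
              simp [hk]
          have h2 : ∑ k, (W i k * y k - W i k * ((1 - y j) * z k)) = W i j * y j := by
            rw [Finset.sum_congr rfl fun k _ => h1 k, Finset.sum_ite_eq']
            simp
          have h3 : ∑ k, W i k * ((1 - y j) * z k) = (1 - y j) * ∑ k, W i k * z k := by
            rw [Finset.mul_sum]
            exact Finset.sum_congr rfl fun k _ => by ring
          have h4 : ∑ k, W i k * y k - (1 - y j) * ∑ k, W i k * z k = W i j * y j := by
            rw [← h3, ← Finset.sum_sub_distrib]
            exact h2
          linear_combination -h4
        have hδeq : δ = (1 - y j) * l1 (fun i => W i j - ∑ k, W i k * z k) := by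
          rw [hδdef]
          unfold l1
          rw [Finset.mul_sum]
          refine Finset.sum_congr rfl fun i _ => ?_
          rw [hid i, abs_mul, abs_of_pos hc]
        rw [hδeq, mul_comm (1 - y j)]
        exact mul_le_mul_of_nonneg_right hκle hc.le
    -- κ ≤ 1
    have hκle1 : kappa W ≤ 1 := by
      have hmem : (1:ℝ) ∈ {c | ∃ (j : Fin r) (z : Fin r → ℝ), (∀ k, 0 ≤ z k) ∧ z j = 0 ∧
          c = l1 (fun i => W i j - ∑ k, W i k * z k)} := by
        refine ⟨j, fun _ => 0, fun k => le_refl 0, rfl, ?_⟩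
        rw [← hWcol j]
        unfold l1
        refine Finset.sum_congr rfl fun i _ => ?_
        simp
      exact hκmem _ hmem
    -- y j ≤ p + β (s - p)
    have hyj2 : y j ≤ p + betaH Hbar * (s - p) := by
      have hsy : y j = ∑ k, H j (σ.symm (Sum.inl k)) * Xopt (σ.symm (Sum.inl k)) i0
          + ∑ l, H j (σ.symm (Sum.inr l)) * Xopt (σ.symm (Sum.inr l)) i0 := by
        rw [hydef]
        exact hbA (fun u => H j u * Xopt u i0)
      have e1 : ∑ k, H j (σ.symm (Sum.inl k)) * Xopt (σ.symm (Sum.inl k)) i0 = p := by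
        rw [Finset.sum_congr rfl (fun k _ => by rw [hHb j k])]
        rw [Finset.sum_congr rfl (fun k _ => (ite_mul _ _ _ _))]
        simp only [one_mul, zero_mul]
        rw [Finset.sum_ite_eq]
        simp [hpdef, hi0]
      have hsplit : s = ∑ k, Xopt (σ.symm (Sum.inl k)) i0
          + ∑ l, Xopt (σ.symm (Sum.inr l)) i0 := by
        rw [hsdef]
        exact hbA (fun u => Xopt u i0)
      have e2 : ∑ l, H j (σ.symm (Sum.inr l)) * Xopt (σ.symm (Sum.inr l)) i0
          ≤ betaH Hbar * ∑ l, Xopt (σ.symm (Sum.inr l)) i0 := by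
        rw [Finset.mul_sum]
        refine Finset.sum_le_sum fun l _ => ?_
        rw [hHbr j l]
        exact mul_le_mul_of_nonneg_right (hHbarle j l) (hnn _ _)
      have e3 : p ≤ ∑ k, Xopt (σ.symm (Sum.inl k)) i0 := by
        have : Xopt (σ.symm (Sum.inl j)) i0 ≤ ∑ k, Xopt (σ.symm (Sum.inl k)) i0 :=
          Finset.single_le_sum (f := fun k => Xopt (σ.symm (Sum.inl k)) i0)
            (fun k _ => hnn _ _) (Finset.mem_univ j)
        rw [hpdef, hi0]
        exact this
      have e4 : ∑ l, Xopt (σ.symm (Sum.inr l)) i0 ≤ s - p := by linarith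
      have e5 : betaH Hbar * ∑ l, Xopt (σ.symm (Sum.inr l)) i0
          ≤ betaH Hbar * (s - p) := mul_le_mul_of_nonneg_left e4 hβ0
      linarith
    -- numeric conclusion
    have hε18 : 18 * ε ≤ 1 := by
      nlinarith [mul_nonneg (by linarith : (0:ℝ) ≤ (r:ℝ) - 1) hε0, hεb', hκle1, hβ0, hκ.le]
    have hδ2 : 17 * δ ≤ 72 * ε := by
      nlinarith [mul_nonneg hδ0 (by linarith : (0:ℝ) ≤ 1 - 18 * ε),
        mul_nonneg hε0 (by linarith : (0:ℝ) ≤ 1 + δ - s), hδ1]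
    have e1 : betaH Hbar * (s - p) ≤ betaH Hbar * (1 + δ - p) :=
      mul_le_mul_of_nonneg_left (by linarith) hβ0
    have e2 : (1 - betaH Hbar) * (1 - p) - betaH Hbar * δ ≤ 1 - y j := by
      linarith [hyj2, e1]
    have e4 : kappa W * ((1 - betaH Hbar) * (1 - p) - betaH Hbar * δ)
        ≤ kappa W * (1 - y j) := mul_le_mul_of_nonneg_left e2 hκ.le
    have e5 : kappa W * betaH Hbar * δ ≤ δ := by
      nlinarith [mul_nonneg (show (0:ℝ) ≤ 1 - kappa W * betaH Hbar by
        nlinarith [hκle1, hβ0, hβ, hκ.le]) hδ0]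
    have hkey : kappa W * ((1 - betaH Hbar) * (1 - p)) ≤ 2 * δ := by linarith [e4, hκy, e5]
    have h6 : 17 * ((1 - p) * (kappa W * (1 - betaH Hbar))) ≤ 144 * ε := by linarith [hkey, hδ2]
    have h7 : ((r:ℝ) + 1) * (17 * ((1 - p) * (kappa W * (1 - betaH Hbar))))
        ≤ ((r:ℝ) + 1) * (144 * ε) :=
      mul_le_mul_of_nonneg_left h6 (by positivity)
    have h8 : ((r:ℝ) + 1) * (144 * ε) ≤ 16 * (kappa W * (1 - betaH Hbar)) := by
      linarith [hεb']
    have hc : 0 < kappa W * (1 - betaH Hbar) := mul_pos hκ (by linarith)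
    have h9 : 17 * ((1 - p) * ((r:ℝ) + 1)) ≤ 16 := by
      by_contra hcon
      push_neg at hcon
      have := mul_lt_mul_of_pos_right hcon hc
      linarith [h7, h8, this]
    rw [div_lt_iff₀ (by positivity : (0:ℝ) < (r:ℝ) + 1)]
    linarith [h9]
  refine ⟨part1, ?_⟩
  -- part 2
  intro u hu
  obtain ⟨l0, hl0⟩ : ∃ l, σ u = Sum.inr l := by
    rcases h : σ u with j | l
    · exact absurd (by rw [← h, Equiv.symm_apply_apply] : u = σ.symm (Sum.inl j)) (hu j)
    · exact ⟨l, rfl⟩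
  have htr' : ∑ k, Xopt (σ.symm (Sum.inl k)) (σ.symm (Sum.inl k))
      + ∑ l, Xopt (σ.symm (Sum.inr l)) (σ.symm (Sum.inr l)) = (r:ℝ) := by
    rw [← hbA (fun u => Xopt u u)]
    simpa [Matrix.trace, Matrix.diag] using htr
  have h1 : Xopt u u ≤ ∑ l, Xopt (σ.symm (Sum.inr l)) (σ.symm (Sum.inr l)) := by
    have hue : u = σ.symm (Sum.inr l0) := by rw [← hl0, Equiv.symm_apply_apply]
    rw [hue]
    exact Finset.single_le_sum
      (f := fun l => Xopt (σ.symm (Sum.inr l)) (σ.symm (Sum.inr l)))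
      (fun l _ => hnn _ _) (Finset.mem_univ l0)
  have h3 : (r:ℝ) * ((r:ℝ) / ((r:ℝ) + 1))
      ≤ ∑ k, Xopt (σ.symm (Sum.inl k)) (σ.symm (Sum.inl k)) := by
    calc (r:ℝ) * ((r:ℝ) / ((r:ℝ) + 1)) = ∑ _k : Fin r, (r:ℝ) / ((r:ℝ) + 1) := by
          rw [Finset.sum_const, Finset.card_univ, Fintype.card_fin, nsmul_eq_mul]
      _ ≤ _ := Finset.sum_le_sum fun k _ => (part1 k).le
  have h4 : (r:ℝ) * ((r:ℝ) / ((r:ℝ) + 1)) + (r:ℝ) / ((r:ℝ) + 1) = (r:ℝ) := by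
    have hr1 : (1:ℝ) ≤ (r:ℝ) := by exact_mod_cast hrpos
    field_simp
  have hgoal : Xopt u u ≤ (r:ℝ) / ((r:ℝ) + 1) := by linarith
  exact hgoal
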